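/- The double integral ∫₀^∞ ∫₀^∞ 1/((1+y)(1+x²y)) dx dy, integrating first in x then in y, equals π²/2. -/

import Mathlib

open MeasureTheory Real

lemma inner_int {y : ℝ} (hy : 0 < y) :
    ∫ x in Set.Ioi (0:ℝ), (1 + x^2 * y)⁻¹ = π / (2 * Real.sqrt y) := by
  have hs : 0 < Real.sqrt y := Real.sqrt_pos.mpr hy
  have h1 : ∀ x : ℝ, (1 + x^2 * y)⁻¹ = (fun t => (1 + t^2)⁻¹) (x * Real.sqrt y) := by
    intro x
    simp only [mul_pow, Real.sq_sqrt hy.le]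
  simp_rw [h1]
  rw [integral_comp_mul_right_Ioi (fun t => (1 + t^2)⁻¹) 0 hs, zero_mul,
    integral_Ioi_inv_one_add_sq]
  simp [arctan_zero, smul_eq_mul]
  field_simp

lemma outer_int : ∫ y in Set.Ioi (0:ℝ), ((1 + y) * Real.sqrt y)⁻¹ = π := by
  have := MeasureTheory.integral_comp_rpow_Ioi_of_pos
    (g := fun y => ((1 + y) * Real.sqrt y)⁻¹) (p := 2) two_pos
  rw [← this]
  have h : ∀ x ∈ Set.Ioi (0:ℝ),
      (2 * x ^ ((2:ℝ) - 1)) • ((1 + x ^ (2:ℝ)) * Real.sqrt (x ^ (2:ℝ)))⁻¹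
        = 2 * (1 + x^2)⁻¹ := by
    intro x hx
    have hx : 0 < x := hx
    have hr : x ^ (2:ℝ) = x ^ 2 := by
      rw [← Real.rpow_natCast x 2]; norm_num
    rw [show ((2:ℝ)-1) = 1 by norm_num, Real.rpow_one, hr, Real.sqrt_sq hx.le]
    have h1 : (0:ℝ) < 1 + x^2 := by positivity
    rw [smul_eq_mul, mul_inv]
    field_simp
  rw [setIntegral_congr_fun measurableSet_Ioi h, integral_const_mul,
    integral_Ioi_inv_one_add_sq]
  simp [arctan_zero]
  ring

theorem stmt0 :
    ∫ y in Set.Ioi (0:ℝ), ∫ x in Set.Ioi (0:ℝ), 1 / ((1 + y) * (1 + x^2 * y))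
      = π^2 / 2 := by
  have h : ∀ y ∈ Set.Ioi (0:ℝ),
      (∫ x in Set.Ioi (0:ℝ), 1 / ((1 + y) * (1 + x^2 * y)))
        = (π/2) * ((1 + y) * Real.sqrt y)⁻¹ := by
    intro y hy
    have hy : 0 < y := hy
    have h1 : (0:ℝ) < 1 + y := by linarith
    have : ∀ x : ℝ, 1 / ((1 + y) * (1 + x^2 * y)) = (1+y)⁻¹ * (1 + x^2 * y)⁻¹ := by
      intro x; rw [one_div, mul_inv]
    simp_rw [this]
    rw [integral_const_mul, inner_int hy, mul_inv]
    have hs : Real.sqrt y ≠ 0 := (Real.sqrt_pos.mpr hy).ne'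
    field_simp
  rw [setIntegral_congr_fun measurableSet_Ioi h, integral_const_mul, outer_int]
  ring
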